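/- Let m be a positive integer and let δ be a positive divisor of λ(m), where λ is the Carmichael function. Then the product over all units a of ℤ/mℤ whose multiplicative order equals δ is congruent to -1 modulo m if δ = 2 and the unit group of ℤ/mℤ is cyclic (i.e., m has a primitive root), and is congruent to 1 modulo m otherwise. -/

import Mathlib

open Finset

/-- The Carmichael function `λ(m)`: the exponent of the group of units of `ℤ/mℤ`. -/
noncomputable def carmichael (m : ℕ) : ℕ := Monoid.exponent (ZMod m)ˣ

lemma prod_eq_pow_half {G : Type*} [CommGroup G] [DecidableEq G] (t : G)
    (ht : t * t = 1) (htne : t ≠ 1) :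
    ∀ S : Finset G, (∀ x ∈ S, x * x = 1) → (∀ x ∈ S, t * x ∈ S) →
      ∏ x ∈ S, x = t ^ (S.card / 2) := by
  intro S
  induction S using Finset.strongInduction with
  | _ S ih =>
    intro h1 hmem
    obtain rfl | ⟨x, hx⟩ := S.eq_empty_or_nonempty
    · simp
    have htx : t * x ∈ S := hmem x hx
    have hne : x ≠ t * x := by
      intro h
      apply htne
      have h' : t * x = 1 * x := by rw [one_mul, ← h]
      exact mul_right_cancel h'
    have hsub : {x, t * x} ⊆ S := by
      intro y hy
      rcases mem_insert.1 hy with rfl | hy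
      · exact hx
      · rw [mem_singleton.1 hy]; exact htx
    have hcard2 : 2 ≤ S.card := by
      have := card_le_card hsub
      rwa [card_pair hne] at this
    have htinv : t⁻¹ = t := by
      rw [inv_eq_iff_mul_eq_one, ht]
    have hSS : S \ {x, t * x} ⊂ S := by
      refine Finset.ssubset_iff_of_subset sdiff_subset |>.2 ⟨x, hx, ?_⟩
      simp
    have hclos : ∀ y ∈ S \ {x, t * x}, t * y ∈ S \ {x, t * x} := by
      intro y hy
      rw [mem_sdiff] at hy ⊢
      obtain ⟨hyS, hyn⟩ := hy
      simp only [mem_insert, mem_singleton, not_or] at hyn ⊢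
      refine ⟨hmem y hyS, ?_, ?_⟩
      · intro h
        apply hyn.2
        rw [← h, ← mul_assoc, ht, one_mul]
      · intro h
        exact hyn.1 (mul_left_cancel h)
    have ih' := ih _ hSS (fun y hy => h1 y (sdiff_subset hy)) hclos
    have hprod : ∏ y ∈ S, y = (∏ y ∈ S \ {x, t * x}, y) * ∏ y ∈ ({x, t * x} : Finset G), y :=
      (prod_sdiff hsub).symm
    have hxtx : x * (t * x) = t := by
      rw [mul_comm t x, ← mul_assoc, h1 x hx, one_mul]
    rw [hprod, prod_pair hne, ih', hxtx, card_sdiff_of_subset hsub, card_pair hne, ← pow_succ]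
    congr 1
    omega

lemma prod_sq_filter_eq_one {G : Type*} [CommGroup G] [Fintype G] [DecidableEq G]
    {t₁ t₂ : G} (h₁ : t₁ * t₁ = 1) (h₂ : t₂ * t₂ = 1) (n₁ : t₁ ≠ 1) (n₂ : t₂ ≠ 1)
    (hne : t₁ ≠ t₂) :
    ∏ x ∈ univ.filter (fun x : G => x * x = 1), x = 1 := by
  set T := univ.filter (fun x : G => x * x = 1) with hT
  have hmem : ∀ (t : G), t * t = 1 → ∀ x ∈ T, t * x ∈ T := by
    intro t htt x hxT
    simp only [hT, mem_filter, mem_univ, true_and] at *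
    calc (t * x) * (t * x) = (t * t) * (x * x) := by
          rw [mul_mul_mul_comm]
      _ = 1 := by rw [htt, hxT, one_mul]
  have hsq : ∀ x ∈ T, x * x = 1 := fun x hx => (mem_filter.1 hx).2
  have e1 := prod_eq_pow_half t₁ h₁ n₁ T hsq (hmem t₁ h₁)
  have e2 := prod_eq_pow_half t₂ h₂ n₂ T hsq (hmem t₂ h₂)
  show ∏ x ∈ T, x = 1
  rcases Nat.even_or_odd (T.card / 2) with he | ho
  · obtain ⟨j, hj⟩ := he
    rw [e1, hj, ← two_mul, pow_mul, pow_two, h₁, one_pow]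
  · obtain ⟨j, hj⟩ := ho
    have f1 : t₁ ^ (T.card / 2) = t₁ := by
      rw [hj, pow_succ, pow_mul, pow_two, h₁, one_pow, one_mul]
    have f2 : t₂ ^ (T.card / 2) = t₂ := by
      rw [hj, pow_succ, pow_mul, pow_two, h₂, one_pow, one_mul]
    have : t₁ = t₂ := by rw [← f1, ← e1, e2, f2]
    exact absurd this hne

lemma isCyclic_units_prime_pow {p : ℕ} (hp : p.Prime) (hodd : Odd p) {v : ℕ} (hv : 0 < v) :
    IsCyclic (ZMod (p ^ v))ˣ := by
  haveI : Fact p.Prime := ⟨hp⟩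
  haveI : NeZero (p ^ v) := ⟨pow_ne_zero v hp.pos.ne'⟩
  have hp2 : p ≠ 2 := by rintro rfl; exact absurd hodd (by decide)
  have hp3 : 3 ≤ p := by have := hp.two_le; omega
  have hnd : ¬ p ∣ 1 + p := by
    intro h
    have h1 : p ∣ 1 := by
      have := Nat.dvd_sub h (dvd_refl p)
      simpa using this
    have := Nat.le_of_dvd one_pos h1
    omega
  have hcop : Nat.Coprime (1 + p) (p ^ v) := by
    apply Nat.Coprime.pow_right
    rw [Nat.coprime_comm]
    exact (hp.coprime_iff_not_dvd).2 hnd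
  set u : (ZMod (p ^ v))ˣ := ZMod.unitOfCoprime _ hcop with hu
  have hcoe : (u : ZMod (p ^ v)) = ((1 + p : ℤ) : ZMod (p ^ v)) := by
    rw [hu, ZMod.coe_unitOfCoprime]
    push_cast
    ring
  have hval : ∀ n : ℕ, u ^ n = 1 ↔ ((p : ℤ) ^ v ∣ (1 + p : ℤ) ^ n - 1) := by
    intro n
    rw [Units.ext_iff, Units.val_pow_eq_pow_val, Units.val_one, hcoe,
      show ((1 + p : ℤ) : ZMod (p ^ v)) ^ n = (((1 + p : ℤ) ^ n : ℤ) : ZMod (p ^ v)) by push_cast; ring,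
      ← sub_eq_zero,
      show ((((1 + p : ℤ) ^ n : ℤ)) : ZMod (p ^ v)) - 1 = (((1 + p : ℤ) ^ n - 1 : ℤ) : ZMod (p ^ v)) by push_cast; ring,
      ZMod.intCast_zmod_eq_zero_iff_dvd]
    push_cast
    rfl
  have hlte : ∀ j : ℕ, emultiplicity (p : ℤ) ((1 + p : ℤ) ^ (p ^ j) - 1) = ((1 + j : ℕ) : ℕ∞) := by
    intro j
    have h1 : (p : ℤ) ∣ (1 + p) - 1 := by simp
    have h2 : ¬ (p : ℤ) ∣ (1 + (p : ℤ)) := by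
      intro h
      apply hnd
      exact_mod_cast h
    have hmain := Int.emultiplicity_pow_sub_pow hp hodd h1 h2 (p ^ j)
    rw [one_pow] at hmain
    rw [hmain, add_sub_cancel_left]
    have e1 : emultiplicity ((p : ℕ) : ℤ) ((p : ℕ) : ℤ) = 1 := by
      simpa using emultiplicity_pow_self_of_prime (Nat.prime_iff_prime_int.mp hp) 1
    have e2 : emultiplicity p (p ^ j) = j := emultiplicity_pow_self_of_prime hp.prime j
    rw [e1, e2]
    push_cast
    ring
  have horder : orderOf u = p ^ (v - 1) := by
    have hdvd : orderOf u ∣ p ^ (v - 1) := by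
      apply orderOf_dvd_of_pow_eq_one
      rw [hval]
      apply pow_dvd_of_le_emultiplicity
      rw [hlte]
      exact_mod_cast le_of_eq (by omega)
    obtain ⟨j, hj, hju⟩ := (Nat.dvd_prime_pow hp).1 hdvd
    rw [hju]
    congr 1
    by_contra hjne
    have hj2 : j ≤ v - 2 ∧ 2 ≤ v := by omega
    have hpow : u ^ (p ^ (v - 2)) = 1 := by
      apply orderOf_dvd_iff_pow_eq_one.1
      rw [hju]
      exact pow_dvd_pow p hj2.1
    have hle := le_emultiplicity_of_pow_dvd ((hval _).1 hpow)
    rw [hlte] at hle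
    have : v ≤ 1 + (v - 2) := by exact_mod_cast hle
    omega
  have hdvdp : p ∣ p ^ v := dvd_pow_self p hv.ne'
  obtain ⟨w, hw⟩ := IsCyclic.exists_generator (α := (ZMod p)ˣ)
  obtain ⟨g, hg⟩ := ZMod.unitsMap_surjective hdvdp w
  have hcardp : Fintype.card (ZMod p)ˣ = p - 1 := by
    rw [ZMod.card_units_eq_totient, Nat.totient_prime hp]
  have hww : orderOf w = p - 1 := by
    rw [orderOf_eq_card_of_forall_mem_zpowers hw, Nat.card_eq_fintype_card, hcardp]
  have hcpm1 : Nat.Coprime (p - 1) p := by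
    rw [Nat.coprime_comm]
    refine (hp.coprime_iff_not_dvd).2 fun h => ?_
    have := Nat.le_of_dvd (by omega) h
    omega
  have hordw : orderOf (w ^ (p ^ (v - 1))) = p - 1 := by
    rw [orderOf_pow' _ (pow_ne_zero _ hp.pos.ne'), hww,
      Nat.Coprime.gcd_eq_one (Nat.Coprime.pow_right _ hcpm1), Nat.div_one]
  have hmaph : ZMod.unitsMap hdvdp (g ^ (p ^ (v - 1))) = w ^ (p ^ (v - 1)) := by
    rw [map_pow, hg]
  have hdvd1 : p - 1 ∣ orderOf (g ^ (p ^ (v - 1))) := by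
    have := orderOf_map_dvd (ZMod.unitsMap hdvdp) (g ^ (p ^ (v - 1)))
    rwa [hmaph, hordw] at this
  have hcard : Fintype.card (ZMod (p ^ v))ˣ = p ^ (v - 1) * (p - 1) := by
    rw [ZMod.card_units_eq_totient, Nat.totient_prime_pow hp hv]
  have hdvd2 : orderOf (g ^ (p ^ (v - 1))) ∣ p - 1 := by
    apply orderOf_dvd_of_pow_eq_one
    rw [← pow_mul, ← hcard]
    exact pow_card_eq_one
  have hordh : orderOf (g ^ (p ^ (v - 1))) = p - 1 := Nat.dvd_antisymm hdvd2 hdvd1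
  have hcop2 : Nat.Coprime (p ^ (v - 1)) (p - 1) := Nat.Coprime.pow_left _ hcpm1.symm
  have hord : orderOf (u * g ^ (p ^ (v - 1))) = p ^ (v - 1) * (p - 1) := by
    rw [(Commute.all u _).orderOf_mul_eq_mul_orderOf_of_coprime
      (by rw [horder, hordh]; exact hcop2), horder, hordh]
  exact isCyclic_of_orderOf_eq_card _ (by rw [hord, Nat.card_eq_fintype_card, hcard])


lemma isCyclic_units_two_mul_prime_pow {p : ℕ} (hp : p.Prime) (hodd : Odd p) {v : ℕ}
    (hv : 0 < v) : IsCyclic (ZMod (2 * p ^ v))ˣ := by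
  haveI : NeZero (p ^ v) := ⟨pow_ne_zero v hp.pos.ne'⟩
  haveI : NeZero (2 * p ^ v) := ⟨Nat.mul_ne_zero two_ne_zero (pow_ne_zero v hp.pos.ne')⟩
  haveI := isCyclic_units_prime_pow hp hodd hv
  have hp2 : p ≠ 2 := by rintro rfl; exact absurd hodd (by decide)
  have hd : p ^ v ∣ 2 * p ^ v := dvd_mul_left _ _
  have hsurj := ZMod.unitsMap_surjective hd
  have hcop : Nat.Coprime 2 (p ^ v) := by
    refine (Nat.prime_two.coprime_iff_not_dvd).2 fun h => ?_
    have h2 := Nat.prime_two.dvd_of_dvd_pow h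
    have := (Nat.prime_dvd_prime_iff_eq Nat.prime_two hp).1 h2
    exact hp2 this.symm
  have hcards : Fintype.card (ZMod (2 * p ^ v))ˣ = Fintype.card (ZMod (p ^ v))ˣ := by
    rw [ZMod.card_units_eq_totient, ZMod.card_units_eq_totient, Nat.totient_mul hcop,
      Nat.totient_two, one_mul]
  have hbij : Function.Bijective (ZMod.unitsMap hd) :=
    (Fintype.bijective_iff_surjective_and_card _).2 ⟨hsurj, hcards⟩
  exact isCyclic_of_surjective (MulEquiv.ofBijective _ hbij).symm
    (MulEquiv.ofBijective _ hbij).symm.surjective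

lemma isCyclic_units_of_sq {m : ℕ} [NeZero m]
    (H : ∀ x : (ZMod m)ˣ, x * x = 1 → x = 1 ∨ x = -1) : IsCyclic (ZMod m)ˣ := by
  have hm0 : m ≠ 0 := NeZero.ne m
  have Hz : ∀ x : ZMod m, x * x = 1 → x = 1 ∨ x = -1 := by
    intro x hx
    obtain ⟨uu, huu⟩ := IsUnit.of_mul_eq_one (a := x) x hx
    rcases H uu (Units.ext (by rw [Units.val_mul, huu, hx, Units.val_one])) with h | h
    · left; rw [← huu, h, Units.val_one]
    · right; rw [← huu, h, Units.val_neg, Units.val_one]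
  have hsplit : ∀ a b : ℕ, 2 < a → 2 < b → Nat.Coprime a b → m = a * b → False := by
    intro a b ha hb hab hm
    haveI : NeZero a := ⟨by omega⟩
    haveI : NeZero b := ⟨by omega⟩
    haveI : Fact (2 < a) := ⟨ha⟩
    haveI : Fact (2 < b) := ⟨hb⟩
    subst hm
    set e := ZMod.chineseRemainder hab with he
    set x : ZMod (a * b) := e.symm (1, -1) with hx
    have hex : e x = (1, -1) := by rw [hx, RingEquiv.apply_symm_apply]
    have hx2 : x * x = 1 := by
      apply e.injective
      rw [map_mul, map_one, hex]
      ext <;> simp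
    rcases Hz x hx2 with h | h
    · have h3 := congrArg e h
      rw [hex, map_one] at h3
      have h2 : (-1 : ZMod b) = 1 := by simpa using congrArg Prod.snd h3
      exact CharP.neg_one_ne_one (R := ZMod b) b h2
    · have h3 := congrArg e h
      rw [hex, map_neg, map_one] at h3
      have h2 : (1 : ZMod a) = -1 := by simpa using congrArg Prod.fst h3
      exact CharP.neg_one_ne_one (R := ZMod a) a h2.symm
  by_cases hop : ∃ p, p.Prime ∧ p ≠ 2 ∧ p ∣ m
  · obtain ⟨p, hp, hp2, hpm⟩ := hop
    have hodd : Odd p := hp.odd_of_ne_two hp2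
    have hp3 : 3 ≤ p := by have := hp.two_le; omega
    set v := m.factorization p with hv
    have hv1 : 0 < v := hp.factorization_pos_of_dvd hm0 hpm
    obtain ⟨r, hrdef⟩ : ∃ r, m / p ^ v = r := ⟨_, rfl⟩
    have hm : m = p ^ v * r := by
      rw [← hrdef]
      exact (Nat.ordProj_mul_ordCompl_eq_self m p).symm
    have hpr : ¬ p ∣ r := by
      rw [← hrdef]
      exact Nat.not_dvd_ordCompl hp hm0
    have hcop : Nat.Coprime (p ^ v) r :=
      Nat.Coprime.pow_left _ ((hp.coprime_iff_not_dvd).2 hpr)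
    have hp3v : 2 < p ^ v := by
      have hle : p ≤ p ^ v := Nat.le_self_pow hv1.ne' p
      omega
    have hr0 : r ≠ 0 := by
      intro h
      rw [h, mul_zero] at hm
      exact hm0 hm
    have hr12 : r = 1 ∨ r = 2 := by
      by_contra hcon
      push_neg at hcon
      obtain ⟨hc1, hc2⟩ := hcon
      have hgt : 2 < r := by omega
      exact hsplit (p ^ v) r hp3v hgt hcop hm
    rcases hr12 with h | h
    · rw [h, mul_one] at hm
      exact hm ▸ isCyclic_units_prime_pow hp hodd hv1
    · rw [h] at hm
      rw [mul_comm] at hm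
      exact hm ▸ isCyclic_units_two_mul_prime_pow hp hodd hv1
  · push_neg at hop
    have hpow2 : ∀ {q : ℕ}, q.Prime → q ∣ m → q = 2 := by
      intro q hq hqm
      by_contra hq2
      exact hop q hq hq2 hqm
    have hm2 : m = 2 ^ m.primeFactorsList.length :=
      Nat.eq_prime_pow_of_unique_prime_dvd hm0 hpow2
    set e := m.primeFactorsList.length with hee
    by_cases he : e ≤ 2
    · -- m = 1, 2, or 4
      have hcard : Fintype.card (ZMod m)ˣ ≤ 2 := by
        rw [ZMod.card_units_eq_totient, hm2]
        interval_cases e <;> decide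
      rcases Nat.lt_or_ge (Fintype.card (ZMod m)ˣ) 2 with h | h
      · haveI : Subsingleton (ZMod m)ˣ := Fintype.card_le_one_iff_subsingleton.1 (by omega)
        infer_instance
      · have hc2 : Nat.card (ZMod m)ˣ = 2 := by
          rw [Nat.card_eq_fintype_card]; omega
        haveI : Fact (Nat.Prime 2) := ⟨Nat.prime_two⟩
        exact isCyclic_of_prime_card hc2
    · exfalso
      push_neg at he
      set x : ZMod m := ((2 ^ (e - 1) - 1 : ℤ) : ZMod m) with hxd
      have hme : (m : ℤ) = 2 ^ e := by exact_mod_cast congrArg (Nat.cast : ℕ → ℤ) hm2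
      have hkey : ((2 : ℤ) ^ (e - 1) - 1) * ((2 : ℤ) ^ (e - 1) - 1) - 1
          = 2 ^ e * (2 ^ (e - 2) - 1) := by
        have h1 : e - 1 = (e - 2) + 1 := by omega
        have h2 : e = (e - 2) + 2 := by omega
        rw [h1]
        nth_rewrite 3 [h2]
        ring
      have hx2 : x * x = 1 := by
        rw [← sub_eq_zero, hxd]
        have : ((2 ^ (e - 1) - 1 : ℤ) : ZMod m) * ((2 ^ (e - 1) - 1 : ℤ) : ZMod m) - 1
            = ((((2 : ℤ) ^ (e - 1) - 1) * ((2 : ℤ) ^ (e - 1) - 1) - 1 : ℤ) : ZMod m) := by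
          push_cast
          ring
        rw [this, ZMod.intCast_zmod_eq_zero_iff_dvd, hkey, hme]
        exact Dvd.intro _ rfl
      have hpow1 : (4 : ℤ) ≤ 2 ^ (e - 1) := by
        calc (4 : ℤ) = 2 ^ 2 := by norm_num
        _ ≤ 2 ^ (e - 1) := pow_le_pow_right₀ (by norm_num) (by omega)
      have hpowe : (2 : ℤ) ^ e = 2 ^ (e - 1) * 2 := by
        rw [← pow_succ]
        congr 1
        omega
      rcases Hz x hx2 with h | h
      · have hz : ((2 ^ (e - 1) - 2 : ℤ) : ZMod m) = 0 := by
          have : ((2 ^ (e - 1) - 2 : ℤ) : ZMod m) = x - 1 := by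
            rw [hxd]; push_cast; ring
          rw [this, h, sub_self]
        rw [ZMod.intCast_zmod_eq_zero_iff_dvd] at hz
        have hle := Int.le_of_dvd (by omega) hz
        rw [hme] at hle
        omega
      · have hz : ((2 ^ (e - 1) : ℤ) : ZMod m) = 0 := by
          have : ((2 ^ (e - 1) : ℤ) : ZMod m) = x + 1 := by
            rw [hxd]; push_cast; ring
          rw [this, h, neg_add_cancel]
        rw [ZMod.intCast_zmod_eq_zero_iff_dvd] at hz
        have hle := Int.le_of_dvd (by omega) hz
        rw [hme] at hle
        omega



open scoped Classical in
/-- For `m` a positive integer and `δ` a positive divisor of `λ(m)`, the product of all units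
of `ℤ/mℤ` of multiplicative order `δ` is `-1` if `δ = 2` and `m` has a primitive root
(i.e. the unit group is cyclic), and `1` otherwise. -/
theorem prod_units_orderOf_eq (m : ℕ) [NeZero m] (δ : ℕ) (hδpos : 0 < δ)
    (hδ : δ ∣ carmichael m) :
    ∏ a ∈ univ.filter (fun a : (ZMod m)ˣ => orderOf a = δ), (a : ZMod m) =
      if δ = 2 ∧ IsCyclic (ZMod m)ˣ then -1 else 1 := by
  classical
  rcases eq_or_ne δ 2 with rfl | h2
  · have hm2 : 2 < m := by
      by_contra hm
      push_neg at hm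
      have hm1 : 1 ≤ m := Nat.pos_of_ne_zero (NeZero.ne m)
      have h1 : Fintype.card (ZMod m)ˣ = 1 := by
        interval_cases m
        · rw [ZMod.card_units_eq_totient, Nat.totient_one]
        · rw [ZMod.card_units_eq_totient, Nat.totient_two]
      haveI : Subsingleton (ZMod m)ˣ := Fintype.card_le_one_iff_subsingleton.1 h1.le
      have he1 : Monoid.exponent (ZMod m)ˣ = 1 := Monoid.exp_eq_one_of_subsingleton
      rw [carmichael, he1] at hδ
      exact absurd (Nat.le_of_dvd one_pos hδ) (by norm_num)
    haveI := Fact.mk hm2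
    have hneg1 : ((-1 : (ZMod m)ˣ) : ZMod m) = -1 := by
      rw [Units.val_neg, Units.val_one]
    have hne1 : (-1 : (ZMod m)ˣ) ≠ 1 := by
      intro h
      apply CharP.neg_one_ne_one (R := ZMod m) m
      rw [← hneg1, h, Units.val_one]
    have hsq1 : (-1 : (ZMod m)ˣ) * (-1) = 1 := by
      rw [neg_mul_neg, one_mul]
    have hord : orderOf (-1 : (ZMod m)ˣ) = 2 :=
      orderOf_eq_prime (by rw [pow_two]; exact hsq1) hne1
    by_cases hcyc : IsCyclic (ZMod m)ˣ
    · rw [if_pos ⟨rfl, hcyc⟩]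
      have hS : (univ.filter (fun a : (ZMod m)ˣ => orderOf a = 2)) = {-1} := by
        ext a
        simp only [mem_filter, mem_univ, true_and, mem_singleton]
        constructor
        · intro ha
          by_contra hane
          have h1a : a ≠ 1 := by
            intro h
            rw [h, orderOf_one] at ha
            norm_num at ha
          have hsq : a ^ 2 = 1 := by rw [← ha]; exact pow_orderOf_eq_one a
          have hsub2 : ({1, a, -1} : Finset (ZMod m)ˣ) ⊆ univ.filter (fun x => x ^ 2 = 1) := by
            intro y hy
            simp only [mem_insert, mem_singleton] at hy
            simp only [mem_filter, mem_univ, true_and]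
            rcases hy with rfl | rfl | rfl
            · exact one_pow 2
            · exact hsq
            · rw [pow_two]; exact hsq1
          have hcard3 : ({1, a, -1} : Finset (ZMod m)ˣ).card = 3 := by
            rw [card_insert_of_notMem, card_insert_of_notMem, card_singleton]
            · simpa using hane
            · simp only [mem_insert, mem_singleton]
              push_neg
              exact ⟨fun h => h1a h.symm, fun h => hne1 h.symm⟩
          have hle3 := card_le_card hsub2
          have hle2 := IsCyclic.card_pow_eq_one_le (α := (ZMod m)ˣ) (n := 2) (by norm_num)
          omega
        · rintro rfl
          exact hord
      rw [hS, prod_singleton, hneg1]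
    · rw [if_neg (fun h => hcyc h.2)]
      have hex : ∃ x : (ZMod m)ˣ, x * x = 1 ∧ x ≠ 1 ∧ x ≠ -1 := by
        by_contra hcon
        push_neg at hcon
        refine hcyc (isCyclic_units_of_sq fun x hx => ?_)
        rcases eq_or_ne x 1 with h | h
        · exact Or.inl h
        · exact Or.inr (hcon x hx h)
      obtain ⟨x, hx2, hx1, hxm1⟩ := hex
      have hfe : (univ.filter (fun a : (ZMod m)ˣ => orderOf a = 2))
          = (univ.filter (fun a : (ZMod m)ˣ => a * a = 1)).erase 1 := by
        ext a
        simp only [mem_filter, mem_univ, true_and, mem_erase]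
        constructor
        · intro ha
          have h1a : a ≠ 1 := by
            intro h
            rw [h, orderOf_one] at ha
            norm_num at ha
          refine ⟨h1a, ?_⟩
          rw [← pow_two, ← ha]
          exact pow_orderOf_eq_one a
        · rintro ⟨h1a, haa⟩
          exact orderOf_eq_prime (by rwa [pow_two]) h1a
      rw [hfe]
      have hcast : ∏ a ∈ (univ.filter (fun a : (ZMod m)ˣ => a * a = 1)).erase 1, (a : ZMod m)
          = ((∏ a ∈ (univ.filter (fun a : (ZMod m)ˣ => a * a = 1)).erase 1, a : (ZMod m)ˣ) : ZMod m) := by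
        exact (map_prod (Units.coeHom (ZMod m)) (fun a => a) _).symm
      rw [hcast, Finset.prod_erase (f := fun a : (ZMod m)ˣ => a) _ rfl,
        prod_sq_filter_eq_one hx2 hsq1 hx1 hne1 hxm1, Units.val_one]
  · rcases eq_or_ne δ 1 with rfl | h1
    · rw [if_neg (by simp)]
      have hS : (univ.filter (fun a : (ZMod m)ˣ => orderOf a = 1)) = {1} := by
        ext a
        simp [orderOf_eq_one_iff]
      rw [hS, prod_singleton, Units.val_one]
    · rw [if_neg (fun h => h2 h.1)]
      refine Finset.prod_involution (fun a _ => a⁻¹) ?_ ?_ ?_ ?_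
      · intro a ha
        rw [← Units.val_mul, mul_inv_cancel, Units.val_one]
      · intro a ha _
        intro h
        have haa : a * a = 1 := by
          nth_rewrite 2 [← h]
          rw [mul_inv_cancel]
        have hd : orderOf a ∣ 2 := orderOf_dvd_of_pow_eq_one (by rwa [pow_two])
        have ha' := (mem_filter.1 ha).2
        rw [ha'] at hd
        have := Nat.le_of_dvd (by norm_num) hd
        omega
      · intro a ha
        simp only [mem_filter, mem_univ, true_and] at ha ⊢
        rwa [orderOf_inv]
      · intro a ha
        exact inv_inv a
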